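/- Let K be a field, L a finite-dimensional Lie algebra over K, μ ≥ 1, and F : ℤ → (K-subspaces of L) satisfying: F(j) = L for all j ≤ −μ; F(j+1) ⊆ F(j) for all j ≤ −1; ⁅F(j), F(k)⁆ ⊆ F(j+k) for all j, k ≤ 0; F(j−1) = F(j) + ⁅F(−1), F(j)⁆ for all j ≤ −1; and F(j) = {X ∈ F(0) : ⁅X, Z⁆ ∈ F(j−1) for all Z ∈ F(−1)} for every j ≥ 1. If the only Lie ideal of L contained in F(0) is the zero ideal, then there exists ℓ ≥ 1 with F(ℓ) = 0. -/

import Mathlib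

/-- The subspace spanned by all brackets of elements of `A` with elements of `B`. -/
def bracketSpan (K : Type*) {L : Type*} [Field K] [LieRing L] [LieAlgebra K L]
    (A B : Submodule K L) : Submodule K L :=
  Submodule.span K {z | ∃ x ∈ A, ∃ y ∈ B, z = ⁅x, y⁆}

theorem filtration_terminates_of_effective
    (K L : Type*) [Field K] [LieRing L] [LieAlgebra K L] [FiniteDimensional K L]
    (μ : ℕ) (hμ : 1 ≤ μ) (F : ℤ → Submodule K L)
    (h_deep : ∀ j : ℤ, j ≤ -(μ : ℤ) → F j = ⊤)
    (h_mono : ∀ j : ℤ, j ≤ -1 → F (j + 1) ≤ F j)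
    (h_neg : ∀ j k : ℤ, j ≤ 0 → k ≤ 0 → bracketSpan K (F j) (F k) ≤ F (j + k))
    (h_gen : ∀ j : ℤ, j ≤ -1 → F (j - 1) = F j ⊔ bracketSpan K (F (-1)) (F j))
    (h_prol : ∀ j : ℤ, 1 ≤ j → ∀ x : L,
      x ∈ F j ↔ (x ∈ F 0 ∧ ∀ z ∈ F (-1), ⁅x, z⁆ ∈ F (j - 1)))
    (h_eff : ∀ I : LieIdeal K L, (I : Submodule K L) ≤ F 0 → I = ⊥) :
    ∃ ℓ : ℤ, 1 ≤ ℓ ∧ F ℓ = ⊥ := by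
  classical
  -- bracket elements of subspaces land in bracketSpan
  have hmemBS : ∀ (A B : Submodule K L) (x y : L), x ∈ A → y ∈ B →
      ⁅x, y⁆ ∈ bracketSpan K A B := by
    intro A B x y hx hy
    exact Submodule.subset_span ⟨x, hx, y, hy, rfl⟩
  -- B : bracketing with F(-1) lowers degree by one, for every degree
  have hB : ∀ m : ℤ, ∀ x ∈ F m, ∀ z ∈ F (-1), ⁅x, z⁆ ∈ F (m - 1) := by
    intro m x hx z hz
    rcases le_or_gt m 0 with hm | hm
    · have h := h_neg m (-1) hm (by norm_num)
      have := h (hmemBS _ _ x z hx hz)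
      simpa [sub_eq_add_neg] using this
    · exact ((h_prol m hm x).1 hx).2 z hz
  -- full monotonicity : F t ≤ F (t - 1)
  have hMonoPos : ∀ t : ℤ, 1 ≤ t → F t ≤ F (t - 1) := by
    refine Int.le_induction ?_ ?_
    · intro x hx
      simpa using ((h_prol 1 le_rfl x).1 hx).1
    · intro t ht IH x hx
      obtain ⟨hx0, hxz⟩ := (h_prol (t + 1) (by omega) x).1 hx
      have hxt : x ∈ F t := by
        rw [h_prol t ht x]
        refine ⟨hx0, fun z hz => ?_⟩
        have h1 : ⁅x, z⁆ ∈ F t := by simpa using hxz z hz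
        exact IH h1
      simpa using hxt
  have hMono : ∀ t : ℤ, F t ≤ F (t - 1) := by
    intro t
    rcases le_or_gt t 0 with ht | ht
    · have := h_mono (t - 1) (by omega)
      simpa using this
    · exact hMonoPos t ht
  have hMonoLe : ∀ s t : ℤ, s ≤ t → F t ≤ F s := by
    intro s t hst
    refine Int.le_induction (motive := fun t _ => F t ≤ F s) (m := s) le_rfl (fun t _ IH => ?_) t hst
    refine le_trans ?_ IH
    simpa using hMono (t + 1)
  -- main compatibility: ⁅F j, F (-n)⁆ ⊆ F (j - n)
  have hP : ∀ j : ℤ, ∀ n : ℕ, ∀ x ∈ F j, ∀ y ∈ F (-(n : ℤ)), ⁅x, y⁆ ∈ F (j - n) := by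
    -- generic step: if it holds at j - 1 then it holds at j, for j ≥ 1
    have hstep : ∀ j : ℤ, 1 ≤ j →
        (∀ n : ℕ, ∀ x ∈ F (j - 1), ∀ y ∈ F (-(n : ℤ)), ⁅x, y⁆ ∈ F (j - 1 - n)) →
        (∀ n : ℕ, ∀ x ∈ F j, ∀ y ∈ F (-(n : ℤ)), ⁅x, y⁆ ∈ F (j - n)) := by
      intro j hj IH n
      induction n with
      | zero =>
        intro x hx y hy
        push_cast
        rw [sub_zero]
        rw [h_prol j hj]
        have hx0 : x ∈ F 0 := ((h_prol j hj x).1 hx).1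
        have hy0 : y ∈ F (-(0:ℤ)) := by simpa using hy
        refine ⟨?_, fun z hz => ?_⟩
        · have := h_neg 0 0 le_rfl le_rfl (hmemBS _ _ x y hx0 (by simpa using hy))
          simpa using this
        · rw [lie_lie]
          have h1 : ⁅y, z⁆ ∈ F (-1) := by
            have := hB 0 y (by simpa using hy) z hz
            simpa using this
          have h2 : ⁅x, ⁅y, z⁆⁆ ∈ F (j - 1) := hB j x hx _ h1
          have h3 : ⁅x, z⁆ ∈ F (j - 1) := hB j x hx z hz
          have h4 : ⁅⁅x, z⁆, y⁆ ∈ F (j - 1) := by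
            have := IH 0 ⁅x, z⁆ h3 y (by simpa using hy)
            simpa using this
          have h5 : ⁅y, ⁅x, z⁆⁆ ∈ F (j - 1) := by
            rw [← lie_skew]
            exact neg_mem h4
          exact sub_mem h2 h5
      | succ n IHn =>
        intro x hx y hy
        rcases Nat.eq_zero_or_pos n with rfl | hn
        · have := hB j x hx y (by simpa using hy)
          simpa using this
        · -- use h_gen at -n
          have hgen := h_gen (-(n : ℤ)) (by omega)
          have hy' : y ∈ F (-(n : ℤ)) ⊔ bracketSpan K (F (-1)) (F (-(n : ℤ))) := by
            rw [← hgen]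
            have : (-(↑(n + 1) : ℤ)) = -(n : ℤ) - 1 := by push_cast; ring
            rwa [this] at hy
          obtain ⟨a, ha, b, hb, rfl⟩ := Submodule.mem_sup.1 hy'
          rw [lie_add]
          have hgoalcast : (j - ((n : ℤ) + 1)) = (j - n) - 1 := by ring
          have hcast : (j - ((n + 1 : ℕ) : ℤ)) = (j - n) - 1 := by push_cast; ring
          rw [hcast]
          refine add_mem ?_ ?_
          · have := IHn x hx a ha
            exact hMono (j - n) this
          · -- b is in span of brackets ⁅z, w⁆, z ∈ F(-1), w ∈ F(-n)
            refine Submodule.span_induction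
              (p := fun b _ => ⁅x, b⁆ ∈ F ((j - n) - 1)) ?_ ?_ ?_ ?_ hb
            · rintro c ⟨z, hz, w, hw, rfl⟩
              rw [leibniz_lie]
              refine add_mem ?_ ?_
              · have h1 : ⁅x, z⁆ ∈ F (j - 1) := hB j x hx z hz
                have h2 := IH n ⁅x, z⁆ h1 w hw
                have : j - 1 - (n : ℤ) = (j - n) - 1 := by ring
                rwa [this] at h2
              · have h1 : ⁅x, w⁆ ∈ F (j - n) := IHn x hx w hw
                have h2 : ⁅⁅x, w⁆, z⁆ ∈ F ((j - n) - 1) := hB (j - n) _ h1 z hz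
                rw [← lie_skew]
                exact neg_mem h2
            · simp
            · intro u v _ _ hu hv
              rw [lie_add]; exact add_mem hu hv
            · intro c u _ hu
              rw [lie_smul]; exact Submodule.smul_mem _ _ hu
    have hPneg : ∀ j : ℤ, j ≤ 0 → ∀ n : ℕ, ∀ x ∈ F j, ∀ y ∈ F (-(n : ℤ)),
        ⁅x, y⁆ ∈ F (j - n) := by
      intro j hj n x hx y hy
      have := h_neg j (-(n : ℤ)) hj (by omega) (hmemBS _ _ x y hx hy)
      simpa [sub_eq_add_neg] using this
    have hPpos : ∀ j : ℤ, 1 ≤ j → ∀ n : ℕ, ∀ x ∈ F j, ∀ y ∈ F (-(n : ℤ)),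
        ⁅x, y⁆ ∈ F (j - n) := by
      refine Int.le_induction ?_ ?_
      · refine hstep 1 le_rfl ?_
        intro n x hx y hy
        have := hPneg 0 le_rfl n x (by simpa using hx) y hy
        have h' : (0 : ℤ) - n = 1 - 1 - n := by ring
        rwa [h'] at this
      · intro j hj1 IH
        refine hstep (j + 1) (by omega) ?_
        intro n x hx y hy
        have := IH n x (by simpa using hx) y hy
        have h' : j - (n : ℤ) = j + 1 - 1 - n := by ring
        rwa [h'] at this
    intro j
    rcases le_or_gt j 0 with hj | hj
    · exact hPneg j hj
    · exact hPpos j hj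
  -- stabilization via finrank
  set g : ℕ → ℕ := fun n => Module.finrank K (F (1 + n)) with hg
  have hne : (Set.range g).Nonempty := ⟨g 0, ⟨0, rfl⟩⟩
  obtain ⟨n0, hn0⟩ := Nat.sInf_mem hne
  have hstab : F ((1 + n0 : ℤ) + 1) = F (1 + n0 : ℤ) := by
    have hle : F ((1 + n0 : ℤ) + 1) ≤ F (1 + n0 : ℤ) := by
      have := hMono ((1 + n0 : ℤ) + 1)
      simpa using this
    refine le_antisymm hle ?_
    have h1 : g n0 ≤ g (n0 + 1) := hn0 ▸ Nat.sInf_le ⟨n0 + 1, rfl⟩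
    have h2 : F ((1 : ℤ) + (n0 + 1 : ℕ)) = F ((1 + n0 : ℤ) + 1) := by
      push_cast; ring_nf
    have := Submodule.eq_of_le_of_finrank_le hle (by
      rw [hg] at h1
      simp only [Nat.cast_add, Nat.cast_one] at h1
      rw [add_assoc]; exact h1)
    exact this.ge
  set m : ℤ := 1 + n0 with hm
  have hm1 : 1 ≤ m := by omega
  -- constancy beyond m
  have hConst : ∀ t : ℤ, m ≤ t → F t = F m := by
    intro t ht
    refine Int.le_induction (motive := fun t _ => F t = F m) (m := m) rfl (fun t ht' IH => ?_) t ht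
    ext x
    rw [h_prol (t + 1) (by omega) x, ← hstab, h_prol (m + 1) (by omega) x]
    simp only [add_sub_cancel_right]
    rw [IH]
  -- F m is an ideal
  have hIdeal : ∀ (y : L) (x : L), x ∈ F m → ⁅y, x⁆ ∈ F m := by
    intro y x hx
    have hx' : x ∈ F (m + μ) := by
      rw [hConst (m + μ) (by omega)]; exact hx
    have hy' : y ∈ F (-(μ : ℤ)) := by
      rw [h_deep (-(μ:ℤ)) le_rfl]; trivial
    have := hP (m + μ) μ x hx' y hy'
    have h' : m + (μ:ℤ) - μ = m := by ring
    rw [h'] at this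
    rw [← lie_skew]
    exact neg_mem this
  let I : LieIdeal K L :=
    { F m with
      lie_mem := fun {y x} hx => hIdeal y x hx }
  have hIF0 : (I : Submodule K L) ≤ F 0 := by
    intro x hx
    exact ((h_prol m hm1 x).1 hx).1
  have hIbot := h_eff I hIF0
  refine ⟨m, hm1, ?_⟩
  have : (I : Submodule K L) = ⊥ := by rw [hIbot]; rfl
  exact this
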